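/- Let f : ℝ^d → ℝ be L-smooth and convex with minimizer x*, let x ∈ ℝ^d, let 0 < γ ≤ 1/(4L), and let C, δ, σ ≥ 0 and N ≥ 1. Let ĝ and ḡ be random vectors in ℝ^d with E[ḡ] = ∇f(x), E[‖ĝ − ḡ‖²] ≤ C·δ·σ², and E[‖ĝ‖²] ≤ 2C·δ·σ² + 2‖∇f(x)‖² + 2σ²/N. Then E[‖x − γĝ − x*‖²] ≤ ‖x − x*‖² − γ·(f(x) − f(x*)) + 2γ·√(Cδ)·σ·‖x − x*‖ + 2γ²·C·δ·σ² + 2γ²·σ²/N. -/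

import Mathlib

open MeasureTheory ProbabilityTheory

noncomputable section

open RealInnerProductSpace
lemma line_hasDerivAt {d : ℕ} {f : EuclideanSpace ℝ (Fin d) → ℝ}
    (hdiff : Differentiable ℝ f) (x v : EuclideanSpace ℝ (Fin d)) (t : ℝ) :
    HasDerivAt (fun s : ℝ => f (x + s • v)) ⟪gradient f (x + t • v), v⟫ t := by
  have h1 : HasDerivAt (fun s : ℝ => x + s • v) v t := by
    simpa using ((hasDerivAt_id t).smul_const v).const_add x
  have h2 : HasFDerivAt f (InnerProductSpace.toDual ℝ _ (gradient f (x + t • v))) (x + t • v) :=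
    hasGradientAt_iff_hasFDerivAt.mp (hdiff (x + t • v)).hasGradientAt
  exact (h2.comp_hasDerivAt t h1).congr_deriv (by simp)

lemma conv_grad_ineq {d : ℕ} {f : EuclideanSpace ℝ (Fin d) → ℝ}
    (hdiff : Differentiable ℝ f) (hconv : ConvexOn ℝ Set.univ f)
    (x y : EuclideanSpace ℝ (Fin d)) :
    f x - f y ≤ ⟪gradient f x, x - y⟫ := by
  set v := y - x with hv
  have hline : ∀ t : ℝ, HasDerivAt (fun s : ℝ => f (x + s • v)) ⟪gradient f (x + t • v), v⟫ t :=
    line_hasDerivAt hdiff x v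
  have hcomp : ConvexOn ℝ Set.univ (fun s : ℝ => f (x + s • v)) := by
    have := hconv.comp_affineMap (AffineMap.lineMap x y)
    simpa [AffineMap.lineMap_apply, Function.comp_def, hv, add_comm] using this
  have hd := hcomp.deriv_le_slope (Set.mem_univ (0:ℝ)) (Set.mem_univ (1:ℝ)) one_pos
    (hline 0).differentiableAt
  rw [(by simpa using (hline 0).deriv : deriv (fun s : ℝ => f (x + s • v)) 0 = ⟪gradient f x, v⟫)] at hd
  simp [slope_def_field] at hd
  have : ⟪gradient f x, y - x⟫ ≤ f y - f x := by simpa [hv, div_one] using hd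
  have h2 : ⟪gradient f x, x - y⟫ = - ⟪gradient f x, y - x⟫ := by
    rw [← inner_neg_right, neg_sub]
  linarith [this, h2.ge]


lemma line_hasDerivAt' {d : ℕ} {f : EuclideanSpace ℝ (Fin d) → ℝ}
    (hdiff : Differentiable ℝ f) (x v : EuclideanSpace ℝ (Fin d)) (t : ℝ) :
    HasDerivAt (fun s : ℝ => f (x + s • v)) ⟪gradient f (x + t • v), v⟫ t := by
  have h1 : HasDerivAt (fun s : ℝ => x + s • v) v t := by
    simpa using ((hasDerivAt_id t).smul_const v).const_add x
  have h2 : HasFDerivAt f (InnerProductSpace.toDual ℝ _ (gradient f (x + t • v))) (x + t • v) :=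
    hasGradientAt_iff_hasFDerivAt.mp (hdiff (x + t • v)).hasGradientAt
  exact (h2.comp_hasDerivAt t h1).congr_deriv (by simp)

lemma descent_lemma' {d : ℕ} {f : EuclideanSpace ℝ (Fin d) → ℝ} {L : ℝ} (hL : 0 < L)
    (hdiff : Differentiable ℝ f)
    (hsmooth : ∀ y z, ‖gradient f y - gradient f z‖ ≤ L * ‖y - z‖)
    (x v : EuclideanSpace ℝ (Fin d)) :
    f (x + v) ≤ f x + ⟪gradient f x, v⟫ + L / 2 * ‖v‖ ^ 2 := by
  set ψ : ℝ → ℝ := fun t => f (x + t • v) - t * ⟪gradient f x, v⟫ - L * t ^ 2 * ‖v‖ ^ 2 / 2 with hψ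
  have hder : ∀ t : ℝ, HasDerivAt ψ
      (⟪gradient f (x + t • v), v⟫ - ⟪gradient f x, v⟫ - L * t * ‖v‖ ^ 2) t := by
    intro t
    have h1 := line_hasDerivAt' hdiff x v t
    have h2 : HasDerivAt (fun s : ℝ => s * ⟪gradient f x, v⟫) ⟪gradient f x, v⟫ t := by
      simpa using (hasDerivAt_id t).mul_const _
    have h3 : HasDerivAt (fun s : ℝ => L * s ^ 2 * ‖v‖ ^ 2 / 2) (L * t * ‖v‖ ^ 2) t := by
      have := ((hasDerivAt_pow 2 t).const_mul L).mul_const (‖v‖ ^ 2) |>.div_const 2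
      exact this.congr_deriv (by rw [show (2:ℕ) - 1 = 1 from rfl, pow_one]; ring)
    exact (h1.sub h2).sub h3
  have hanti : AntitoneOn ψ (Set.Icc 0 1) := by
    apply antitoneOn_of_deriv_nonpos (convex_Icc 0 1)
    · exact fun t _ => ((hder t).continuousAt).continuousWithinAt
    · exact fun t _ => ((hder t).differentiableAt).differentiableWithinAt
    · intro t ht
      rw [interior_Icc] at ht
      rw [(hder t).deriv]
      have hb : ⟪gradient f (x + t • v) - gradient f x, v⟫ ≤ L * t * ‖v‖ ^ 2 := by
        calc ⟪gradient f (x + t • v) - gradient f x, v⟫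
            ≤ ‖gradient f (x + t • v) - gradient f x‖ * ‖v‖ := real_inner_le_norm _ _
          _ ≤ (L * ‖(x + t • v) - x‖) * ‖v‖ := by
              exact mul_le_mul_of_nonneg_right (hsmooth _ _) (norm_nonneg _)
          _ = L * t * ‖v‖ ^ 2 := by
              simp [norm_smul, abs_of_pos ht.1]; ring
      rw [inner_sub_left] at hb
      linarith
  have h01 : ψ 1 ≤ ψ 0 :=
    hanti (Set.left_mem_Icc.mpr zero_le_one) (Set.right_mem_Icc.mpr zero_le_one) zero_le_one
  have e1 : ψ 1 = f (x + v) - ⟪gradient f x, v⟫ - L * ‖v‖ ^ 2 / 2 := by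
    simp only [hψ, one_smul, one_pow, one_mul, mul_one]
  have e0 : ψ 0 = f x := by
    simp only [hψ, zero_smul, add_zero, zero_mul, mul_zero]
    norm_num
  rw [e1, e0] at h01
  linarith

lemma grad_sq_le' {d : ℕ} {f : EuclideanSpace ℝ (Fin d) → ℝ} {L : ℝ} (hL : 0 < L)
    (hdiff : Differentiable ℝ f)
    (hsmooth : ∀ y z, ‖gradient f y - gradient f z‖ ≤ L * ‖y - z‖)
    (xstar : EuclideanSpace ℝ (Fin d)) (hmin : ∀ y, f xstar ≤ f y)
    (x : EuclideanSpace ℝ (Fin d)) :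
    ‖gradient f x‖ ^ 2 ≤ 2 * L * (f x - f xstar) := by
  have h := descent_lemma' hL hdiff hsmooth x (-(1 / L) • gradient f x)
  have hmin' := hmin (x + -(1 / L) • gradient f x)
  rw [inner_smul_right, real_inner_self_eq_norm_sq, norm_smul] at h
  simp only [norm_neg, Real.norm_eq_abs, abs_of_pos (by positivity : (0:ℝ) < 1/L)] at h
  have hL' : L ≠ 0 := ne_of_gt hL
  rw [mul_pow] at h
  have : f xstar ≤ f x - 1 / (2 * L) * ‖gradient f x‖ ^ 2 := by
    refine hmin'.trans (h.trans_eq ?_)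
    field_simp
    ring
  have h3 : 1 / (2 * L) * ‖gradient f x‖ ^ 2 ≤ f x - f xstar := by linarith
  calc ‖gradient f x‖ ^ 2 = 2 * L * (1 / (2 * L) * ‖gradient f x‖ ^ 2) := by
        field_simp
    _ ≤ 2 * L * (f x - f xstar) :=
        mul_le_mul_of_nonneg_left h3 (by positivity)

/-- One-step distance-decrease inequality for an SGD step with a robustly
aggregated gradient estimate `ĝ`, for `f` `L`-smooth and convex with minimizer `x*`:
`E[‖x − γĝ − x*‖²] ≤ ‖x − x*‖² − γ(f(x) − f(x*)) + 2γ√(Cδ)σ‖x − x*‖ + 2γ²Cδσ² + 2γ²σ²/N`. -/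
theorem btard_sgd_one_step_convex
    {Ω : Type*} [MeasurableSpace Ω] (P : Measure Ω) [IsProbabilityMeasure P]
    {d : ℕ} (f : EuclideanSpace ℝ (Fin d) → ℝ) (L : ℝ) (hL : 0 < L)
    (hdiff : Differentiable ℝ f)
    (hsmooth : ∀ y z, ‖gradient f y - gradient f z‖ ≤ L * ‖y - z‖)
    (hconv : ConvexOn ℝ Set.univ f)
    (xstar : EuclideanSpace ℝ (Fin d)) (hmin : ∀ y, f xstar ≤ f y)
    (x : EuclideanSpace ℝ (Fin d)) (γ C δ σ : ℝ) (N : ℕ) (hN : 1 ≤ N)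
    (hγ : 0 < γ) (hγL : γ ≤ 1 / (4 * L)) (hC : 0 ≤ C) (hδ : 0 ≤ δ) (hσ : 0 ≤ σ)
    (ghat gbar : Ω → EuclideanSpace ℝ (Fin d))
    (hghatint : Integrable ghat P) (hgbarint : Integrable gbar P)
    (hdevint : Integrable (fun ω => ‖ghat ω - gbar ω‖ ^ 2) P)
    (hsecint : Integrable (fun ω => ‖ghat ω‖ ^ 2) P)
    (hmean : ∫ ω, gbar ω ∂P = gradient f x)
    (hdev : ∫ ω, ‖ghat ω - gbar ω‖ ^ 2 ∂P ≤ C * δ * σ ^ 2)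
    (hsec : ∫ ω, ‖ghat ω‖ ^ 2 ∂P
      ≤ 2 * C * δ * σ ^ 2 + 2 * ‖gradient f x‖ ^ 2 + 2 * σ ^ 2 / N) :
    ∫ ω, ‖x - γ • ghat ω - xstar‖ ^ 2 ∂P
      ≤ ‖x - xstar‖ ^ 2 - γ * (f x - f xstar)
        + 2 * γ * Real.sqrt (C * δ) * σ * ‖x - xstar‖
        + 2 * γ ^ 2 * C * δ * σ ^ 2 + 2 * γ ^ 2 * σ ^ 2 / N := by
  set a := x - xstar with ha
  set m := ∫ ω, (ghat ω - gbar ω) ∂P with hm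
  set S := ∫ ω, ‖ghat ω‖ ^ 2 ∂P with hS
  -- pointwise expansion
  have hexp : ∀ ω, ‖x - γ • ghat ω - xstar‖ ^ 2
      = ‖a‖ ^ 2 - 2 * γ * ⟪a, ghat ω⟫ + γ ^ 2 * ‖ghat ω‖ ^ 2 := by
    intro ω
    have h0 : x - γ • ghat ω - xstar = a - γ • ghat ω := by rw [ha]; abel
    rw [h0, norm_sub_sq_real, real_inner_smul_right, norm_smul]
    simp only [Real.norm_eq_abs, mul_pow, sq_abs]
    ring
  -- integrability
  have int_inner : Integrable (fun ω => ⟪a, ghat ω⟫) P := hghatint.const_inner a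
  have intB : Integrable (fun ω => 2 * γ * ⟪a, ghat ω⟫) P := int_inner.const_mul _
  have intC : Integrable (fun ω => γ ^ 2 * ‖ghat ω‖ ^ 2) P := hsecint.const_mul _
  -- split mean of ghat
  have hZint : Integrable (fun ω => ghat ω - gbar ω) P := hghatint.sub hgbarint
  have hsplit : ∫ ω, ghat ω ∂P = gradient f x + m := by
    have h1 : ∀ ω, ghat ω = gbar ω + (ghat ω - gbar ω) := fun ω => by abel
    calc ∫ ω, ghat ω ∂P = ∫ ω, (gbar ω + (ghat ω - gbar ω)) ∂P := by
          exact integral_congr_ae (Filter.Eventually.of_forall fun ω => h1 ω)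
      _ = gradient f x + m := by rw [integral_add hgbarint hZint, hmean]
  -- key identity
  have key : ∫ ω, ‖x - γ • ghat ω - xstar‖ ^ 2 ∂P
      = ‖a‖ ^ 2 - 2 * γ * ⟪a, gradient f x + m⟫ + γ ^ 2 * S := by
    calc ∫ ω, ‖x - γ • ghat ω - xstar‖ ^ 2 ∂P
        = ∫ ω, (‖a‖ ^ 2 - 2 * γ * ⟪a, ghat ω⟫ + γ ^ 2 * ‖ghat ω‖ ^ 2) ∂P :=
          integral_congr_ae (Filter.Eventually.of_forall fun ω => hexp ω)
      _ = ‖a‖ ^ 2 - 2 * γ * ⟪a, gradient f x + m⟫ + γ ^ 2 * S := by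
          have intA : Integrable (fun _ : Ω => ‖a‖ ^ 2) P := integrable_const _
          have intAB : Integrable (fun ω => ‖a‖ ^ 2 - 2 * γ * ⟪a, ghat ω⟫) P := intA.sub intB
          rw [integral_add intAB intC, integral_sub intA intB, integral_const,
            integral_const_mul _ _, integral_const_mul _ _, integral_inner hghatint, hsplit]
          simp [hS]
  rw [key]
  -- bound on ‖m‖
  have hnormZint : Integrable (fun ω => ‖ghat ω - gbar ω‖) P := hZint.norm
  set c := ∫ ω, ‖ghat ω - gbar ω‖ ∂P with hc
  have hc0 : 0 ≤ c := integral_nonneg fun ω => norm_nonneg _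
  have hvar : c ^ 2 ≤ ∫ ω, ‖ghat ω - gbar ω‖ ^ 2 ∂P := by
    have hnn : 0 ≤ ∫ ω, (‖ghat ω - gbar ω‖ - c) ^ 2 ∂P :=
      integral_nonneg fun ω => sq_nonneg _
    have hexp2 : ∀ ω, (‖ghat ω - gbar ω‖ - c) ^ 2
        = ‖ghat ω - gbar ω‖ ^ 2 - 2 * c * ‖ghat ω - gbar ω‖ + c ^ 2 := fun ω => by ring
    have heq : ∫ ω, (‖ghat ω - gbar ω‖ - c) ^ 2 ∂P
        = (∫ ω, ‖ghat ω - gbar ω‖ ^ 2 ∂P) - c ^ 2 := by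
      calc ∫ ω, (‖ghat ω - gbar ω‖ - c) ^ 2 ∂P
          = ∫ ω, (‖ghat ω - gbar ω‖ ^ 2 - 2 * c * ‖ghat ω - gbar ω‖ + c ^ 2) ∂P :=
            integral_congr_ae (Filter.Eventually.of_forall fun ω => hexp2 ω)
        _ = (∫ ω, ‖ghat ω - gbar ω‖ ^ 2 ∂P) - c ^ 2 := by
            have intE : Integrable (fun ω => 2 * c * ‖ghat ω - gbar ω‖) P :=
              hnormZint.const_mul _
            have intDE : Integrable
                (fun ω => ‖ghat ω - gbar ω‖ ^ 2 - 2 * c * ‖ghat ω - gbar ω‖) P :=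
              hdevint.sub intE
            rw [integral_add intDE (integrable_const _), integral_sub hdevint intE,
              integral_const_mul _ _, integral_const]
            simp only [measure_univ, ENNReal.toReal_one, probReal_univ, smul_eq_mul, one_mul, ← hc]
            ring
    rw [heq] at hnn
    linarith
  have hmc : ‖m‖ ≤ c := norm_integral_le_integral_norm _
  have hcbound : c ≤ Real.sqrt (C * δ) * σ := by
    have h1 : c ^ 2 ≤ C * δ * σ ^ 2 := hvar.trans hdev
    have h2 : Real.sqrt (C * δ) * σ = Real.sqrt (C * δ * σ ^ 2) := by
      rw [Real.sqrt_mul (show (0:ℝ) ≤ C * δ by positivity) (σ ^ 2), Real.sqrt_sq hσ]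
    rw [h2]
    exact (Real.le_sqrt hc0 (by positivity)).mpr h1
  have hmb : ‖m‖ ≤ Real.sqrt (C * δ) * σ := hmc.trans hcbound
  -- convexity lower bound on inner product
  have hcvx : f x - f xstar ≤ ⟪a, gradient f x⟫ := by
    have := conv_grad_ineq hdiff hconv x xstar
    rwa [real_inner_comm] at this
  -- inner with m
  have him : -(‖a‖ * (Real.sqrt (C * δ) * σ)) ≤ ⟪a, m⟫ := by
    have h1 : |⟪a, m⟫| ≤ ‖a‖ * ‖m‖ := abs_real_inner_le_norm a m
    have h2 : ‖a‖ * ‖m‖ ≤ ‖a‖ * (Real.sqrt (C * δ) * σ) :=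
      mul_le_mul_of_nonneg_left hmb (norm_nonneg _)
    have := neg_abs_le ⟪a, m⟫
    linarith [abs_nonneg ⟪a, m⟫]
  -- second moment bound with smoothness
  have hF : 0 ≤ f x - f xstar := sub_nonneg.mpr (hmin x)
  have hG : ‖gradient f x‖ ^ 2 ≤ 2 * L * (f x - f xstar) :=
    grad_sq_le' hL hdiff hsmooth xstar hmin x
  have hSb : S ≤ 2 * C * δ * σ ^ 2 + 2 * (2 * L * (f x - f xstar)) + 2 * σ ^ 2 / N := by
    calc S ≤ 2 * C * δ * σ ^ 2 + 2 * ‖gradient f x‖ ^ 2 + 2 * σ ^ 2 / N := hsec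
      _ ≤ _ := by linarith
  have hγ4 : 4 * L * γ ^ 2 ≤ γ := by
    have h1 : γ * (4 * L) ≤ 1 := by
      rw [← le_div_iff₀ (by positivity)]; exact hγL
    nlinarith
  rw [inner_add_right]
  have hsq : 0 ≤ γ ^ 2 := sq_nonneg γ
  have hS2 : γ ^ 2 * S ≤ γ ^ 2 * (2 * C * δ * σ ^ 2 + 2 * (2 * L * (f x - f xstar)) + 2 * σ ^ 2 / N) :=
    mul_le_mul_of_nonneg_left hSb hsq
  have hLF : (4 * L * γ ^ 2) * (f x - f xstar) ≤ γ * (f x - f xstar) :=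
    mul_le_mul_of_nonneg_right hγ4 hF
  have B1 : 2 * γ * (f x - f xstar) ≤ 2 * γ * ⟪a, gradient f x⟫ :=
    mul_le_mul_of_nonneg_left hcvx (by positivity)
  have B2 : 2 * γ * (-(‖a‖ * (Real.sqrt (C * δ) * σ))) ≤ 2 * γ * ⟪a, m⟫ :=
    mul_le_mul_of_nonneg_left him (by positivity)
  ring_nf at hS2 ⊢
  linarith
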